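/- The Narayana polynomials C_{n+1}(z) = Σ_{i=0}^n z^{n-2i} · (n+1)!·n! / ((n-i+1)!·(n-i)!·(i+1)!·i!) together with C_0(z) = z^{-1} satisfy the recurrence C_{n+1}(z) = Σ_{s=0}^n C_s(z^{-1}) · C_{n-s}(z). -/

import Mathlib

open LaurentPolynomial

/-- The Narayana number `N(n,i) = (n+1)!·n! / ((n-i+1)!·(n-i)!·(i+1)!·i!)` as a rational. -/
noncomputable def narayana (n i : ℕ) : ℚ :=
  (Nat.factorial (n + 1) * Nat.factorial n : ℚ) /
    (Nat.factorial (n - i + 1) * Nat.factorial (n - i) *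
      Nat.factorial (i + 1) * Nat.factorial i)

/-- The Narayana (Laurent) polynomials: `C 0 = z⁻¹` and
`C (n+1) = ∑_{i=0}^n N(n,i) · z^(n-2i)`. -/
noncomputable def narayanaPoly : ℕ → LaurentPolynomial ℚ
  | 0 => T (-1)
  | n + 1 => ∑ i ∈ Finset.range (n + 1),
      LaurentPolynomial.C (narayana n i) * T ((n : ℤ) - 2 * i)

namespace NarayanaAux

lemma narayana_eq' (n i d : ℕ) (h : n = i + d) :
    narayana n i = (Nat.factorial (n + 1) * Nat.factorial n : ℚ) /
    (Nat.factorial (d + 1) * Nat.factorial d * Nat.factorial (i + 1) * Nat.factorial i) := by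
  subst h
  unfold narayana
  rw [show i + d - i = d by omega]

lemma fac_ne (m : ℕ) : ((Nat.factorial m : ℚ)) ≠ 0 := by
  exact_mod_cast Nat.factorial_ne_zero m

lemma den_ne (p q r s : ℕ) :
    ((Nat.factorial p : ℚ)) * Nat.factorial q * Nat.factorial r * Nat.factorial s ≠ 0 :=
  mul_ne_zero (mul_ne_zero (mul_ne_zero (fac_ne p) (fac_ne q)) (fac_ne r)) (fac_ne s)

lemma narayana_zero (n : ℕ) : narayana n 0 = 1 := by
  unfold narayana
  rw [show n - 0 = n by omega]
  rw [div_eq_one_iff_eq]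
  · norm_num [Nat.factorial]
  · positivity

lemma narayana_self (n : ℕ) : narayana n n = 1 := by
  unfold narayana
  rw [show n - n = 0 by omega]
  rw [div_eq_one_iff_eq]
  · norm_num [Nat.factorial]
  · positivity

lemma narayana_symm (n i : ℕ) (h : i ≤ n) : narayana n (n - i) = narayana n i := by
  unfold narayana
  rw [show n - (n - i) = i by omega]
  ring

/-- the generic (interior) coefficient identity -/
lemma generic_case (v d : ℕ) :
    ((v:ℚ) + d + 6) * narayana (v+d+4) (v+2)
      = (2*(v:ℚ)+2*d+9) * (narayana (v+d+3) (v+1) + narayana (v+d+3) (v+2))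
        - ((v:ℚ)+d+3) * (narayana (v+d+2) v
            - 2 * narayana (v+d+2) (v+1) + narayana (v+d+2) (v+2)) := by
  set a : ℚ := (Nat.factorial v : ℚ) with ha
  set b : ℚ := (Nat.factorial d : ℚ) with hb
  set c : ℚ := (Nat.factorial (v+d) : ℚ) with hc
  set W : ℚ := ((d:ℚ)+3)*((d:ℚ)+2)^2*((d:ℚ)+1)^2*((v:ℚ)+3)*((v:ℚ)+2)^2*((v:ℚ)+1)^2*(b*b*a*a)
    with hW
  have hWne : W ≠ 0 := by
    rw [hW]
    have hane : a ≠ 0 := by rw [ha]; exact fac_ne v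
    have hbne : b ≠ 0 := by rw [hb]; exact fac_ne d
    have : ((d:ℚ)+3)*((d:ℚ)+2)^2*((d:ℚ)+1)^2*((v:ℚ)+3)*((v:ℚ)+2)^2*((v:ℚ)+1)^2 ≠ 0 := by
      positivity
    exact mul_ne_zero this (mul_ne_zero (mul_ne_zero (mul_ne_zero hbne hbne) hane) hane)
  have h1 : narayana (v+d+4) (v+2) * W
      = (((v:ℚ)+d+5)*((v:ℚ)+d+4)*((v:ℚ)+d+3)*((v:ℚ)+d+2)*((v:ℚ)+d+1))
        * (((v:ℚ)+d+4)*((v:ℚ)+d+3)*((v:ℚ)+d+2)*((v:ℚ)+d+1)) * (c*c) := by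
    rw [narayana_eq' _ (v+2) (d+2) (by omega), div_mul_eq_mul_div, div_eq_iff (den_ne _ _ _ _)]
    push_cast [Nat.factorial_succ]
    ring
  have h2 : narayana (v+d+3) (v+1) * W
      = ((v:ℚ)+3)*((v:ℚ)+2) * ((((v:ℚ)+d+4)*((v:ℚ)+d+3)*((v:ℚ)+d+2)*((v:ℚ)+d+1))
        * (((v:ℚ)+d+3)*((v:ℚ)+d+2)*((v:ℚ)+d+1))) * (c*c) := by
    rw [narayana_eq' _ (v+1) (d+2) (by omega), div_mul_eq_mul_div, div_eq_iff (den_ne _ _ _ _)]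
    push_cast [Nat.factorial_succ]
    ring
  have h3 : narayana (v+d+3) (v+2) * W
      = ((d:ℚ)+3)*((d:ℚ)+2) * ((((v:ℚ)+d+4)*((v:ℚ)+d+3)*((v:ℚ)+d+2)*((v:ℚ)+d+1))
        * (((v:ℚ)+d+3)*((v:ℚ)+d+2)*((v:ℚ)+d+1))) * (c*c) := by
    rw [narayana_eq' _ (v+2) (d+1) (by omega), div_mul_eq_mul_div, div_eq_iff (den_ne _ _ _ _)]
    push_cast [Nat.factorial_succ]
    ring
  have h4 : narayana (v+d+2) v * W
      = ((v:ℚ)+3)*((v:ℚ)+2)^2*((v:ℚ)+1) * ((((v:ℚ)+d+3)*((v:ℚ)+d+2)*((v:ℚ)+d+1))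
        * (((v:ℚ)+d+2)*((v:ℚ)+d+1))) * (c*c) := by
    rw [narayana_eq' _ v (d+2) (by omega), div_mul_eq_mul_div, div_eq_iff (den_ne _ _ _ _)]
    push_cast [Nat.factorial_succ]
    ring
  have h5 : narayana (v+d+2) (v+1) * W
      = ((d:ℚ)+3)*((d:ℚ)+2)*((v:ℚ)+3)*((v:ℚ)+2) * ((((v:ℚ)+d+3)*((v:ℚ)+d+2)*((v:ℚ)+d+1))
        * (((v:ℚ)+d+2)*((v:ℚ)+d+1))) * (c*c) := by
    rw [narayana_eq' _ (v+1) (d+1) (by omega), div_mul_eq_mul_div, div_eq_iff (den_ne _ _ _ _)]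
    push_cast [Nat.factorial_succ]
    ring
  have h6 : narayana (v+d+2) (v+2) * W
      = ((d:ℚ)+3)*((d:ℚ)+2)^2*((d:ℚ)+1) * ((((v:ℚ)+d+3)*((v:ℚ)+d+2)*((v:ℚ)+d+1))
        * (((v:ℚ)+d+2)*((v:ℚ)+d+1))) * (c*c) := by
    rw [narayana_eq' _ (v+2) d (by omega), div_mul_eq_mul_div, div_eq_iff (den_ne _ _ _ _)]
    push_cast [Nat.factorial_succ]
    ring
  apply mul_right_cancel₀ hWne
  linear_combination ((v:ℚ)+d+6) * h1 - (2*(v:ℚ)+2*d+9) * h2 - (2*(v:ℚ)+2*d+9) * h3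
    + ((v:ℚ)+d+3) * h4 - (2*((v:ℚ)+d+3)) * h5 + ((v:ℚ)+d+3) * h6

/-- the edge coefficient identity used both for `j = 1` and `j = r+1`. -/
lemma edge_data (d : ℕ) :
    narayana (d+3) 1 = narayana (d+3) (d+2)
    ∧ True := ⟨by
      have := narayana_symm (d+3) 1 (by omega)
      rw [show d+3-1 = d+2 by omega] at this
      exact this.symm, trivial⟩

/-- edge case: second column (`j = 1`), rows shifted by `d`. -/
lemma edge_case (d : ℕ) :
    ((d:ℚ) + 5) * narayana (d+3) 1
      = (2*(d:ℚ)+7) * (1 + narayana (d+2) 1)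
        - ((d:ℚ)+2) * (0 - 2 * 1 + narayana (d+1) 1) := by
  set b : ℚ := (Nat.factorial d : ℚ) with hb
  set W : ℚ := 2*(((d:ℚ)+3)*((d:ℚ)+2)^2*((d:ℚ)+1)^2)*(b*b) with hW
  have hWne : W ≠ 0 := by
    rw [hW]
    have hbne : b ≠ 0 := by rw [hb]; exact fac_ne d
    have : 2*(((d:ℚ)+3)*((d:ℚ)+2)^2*((d:ℚ)+1)^2) ≠ 0 := by positivity
    exact mul_ne_zero this (mul_ne_zero hbne hbne)
  have h1 : narayana (d+3) 1 * W
      = (((d:ℚ)+4)*((d:ℚ)+3)*((d:ℚ)+2)*((d:ℚ)+1))*(((d:ℚ)+3)*((d:ℚ)+2)*((d:ℚ)+1))*(b*b) := by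
    rw [narayana_eq' _ 1 (d+2) (by omega), div_mul_eq_mul_div, div_eq_iff (den_ne _ _ _ _)]
    push_cast [Nat.factorial_succ]
    norm_num [Nat.factorial]
    ring
  have h2 : narayana (d+2) 1 * W
      = ((d:ℚ)+3)*((d:ℚ)+2)*((((d:ℚ)+3)*((d:ℚ)+2)*((d:ℚ)+1))*(((d:ℚ)+2)*((d:ℚ)+1)))*(b*b) := by
    rw [narayana_eq' _ 1 (d+1) (by omega), div_mul_eq_mul_div, div_eq_iff (den_ne _ _ _ _)]
    push_cast [Nat.factorial_succ]
    norm_num [Nat.factorial]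
    ring
  have h4 : narayana (d+1) 1 * W
      = ((d:ℚ)+3)*((d:ℚ)+2)^2*((d:ℚ)+1)*((((d:ℚ)+2)*((d:ℚ)+1))*((d:ℚ)+1))*(b*b) := by
    rw [narayana_eq' _ 1 d (by omega), div_mul_eq_mul_div, div_eq_iff (den_ne _ _ _ _)]
    push_cast [Nat.factorial_succ]
    norm_num [Nat.factorial]
    ring
  apply mul_right_cancel₀ hWne
  linear_combination ((d:ℚ)+5) * h1 - (2*(d:ℚ)+7) * h2 + ((d:ℚ)+2) * h4

end NarayanaAux

namespace NarayanaAux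

noncomputable def cf (m j : ℕ) : ℚ := if j ≤ m then narayana m j else 0

lemma cf_in {m j : ℕ} (h : j ≤ m) : cf m j = narayana m j := if_pos h
lemma cf_out {m j : ℕ} (h : m < j) : cf m j = 0 := if_neg (by omega)

lemma key (r j : ℕ) :
    ((r:ℚ)+4) * cf (r+2) j
      = (2*(r:ℚ)+5) * ((if 1 ≤ j then cf (r+1) (j-1) else 0) + cf (r+1) j)
        - ((r:ℚ)+1) * ((if 2 ≤ j then cf r (j-2) else 0)
            - 2 * (if 1 ≤ j then cf r (j-1) else 0) + cf r j) := by
  rcases Nat.eq_zero_or_pos j with rfl | hj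
  · rw [if_neg (by omega), if_neg (by omega), if_neg (by omega),
      cf_in (by omega), cf_in (by omega), cf_in (by omega),
      narayana_zero, narayana_zero, narayana_zero]
    ring
  rcases lt_or_ge (r+2) j with hbig | hle
  · rw [if_pos (by omega), if_pos (by omega),
      cf_out (show r+2 < j by omega), cf_out (show r+1 < j-1 by omega),
      cf_out (show r+1 < j by omega), cf_out (show r < j-2 by omega),
      cf_out (show r < j-1 by omega), cf_out (show r < j by omega)]
    simp
  rcases eq_or_lt_of_le hle with heq | hlt
  · subst heq
    rw [if_pos (by omega), if_pos (by omega),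
      show r+2-1 = r+1 by omega, show r+2-2 = r by omega,
      cf_in (by omega), cf_in (by omega), cf_out (by omega),
      cf_in (by omega), cf_out (by omega), cf_out (by omega),
      narayana_self, narayana_self, narayana_self]
    simp only [if_pos (show 1 ≤ r+2 by omega)]
    ring
  have hle1 : j ≤ r + 1 := by omega
  rcases eq_or_lt_of_le hle1 with heq | hlt2
  · subst heq
    rcases Nat.eq_zero_or_pos r with rfl | hr
    · norm_num [cf, narayana, Nat.factorial]
    obtain ⟨d, rfl⟩ : ∃ d, r = d + 1 := ⟨r - 1, by omega⟩
    rw [if_pos (by omega), if_pos (by omega),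
      show d+1+1-1 = d+1 by omega, show d+1+1-2 = d by omega,
      cf_in (by omega), cf_in (by omega), cf_in (by omega),
      cf_in (by omega), cf_in (by omega), cf_out (by omega)]
    have s1 : narayana (d+1+2) (d+1+1) = narayana (d+3) 1 := by
      have := narayana_symm (d+3) 1 (by omega)
      rw [show d+3-1 = d+2 by omega] at this
      rw [show d+1+2 = d+3 by omega, show d+1+1 = d+2 by omega, this]
    have s2 : narayana (d+1+1) (d+1) = narayana (d+2) 1 := by
      have := narayana_symm (d+2) 1 (by omega)
      rw [show d+2-1 = d+1 by omega] at this
      rw [show d+1+1 = d+2 by omega, this]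
    have s3 : narayana (d+1) d = narayana (d+1) 1 := by
      have := narayana_symm (d+1) 1 (by omega)
      rw [show d+1-1 = d by omega] at this
      rw [this]
    rw [s1, s2, s3, narayana_self, narayana_self]
    have h := edge_case d
    push_cast at h ⊢
    linear_combination h
  -- now 1 ≤ j ≤ r
  have hjr : j ≤ r := by omega
  rcases eq_or_lt_of_le (show 1 ≤ j from hj) with heq | hj2
  · -- j = 1
    obtain rfl : j = 1 := heq.symm
    obtain ⟨d, rfl⟩ : ∃ d, r = d + 1 := ⟨r - 1, by omega⟩
    rw [if_pos (by omega), if_neg (by omega),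
      show (1:ℕ)-1 = 0 from rfl,
      cf_in (by omega), cf_in (by omega), cf_in (by omega),
      cf_in (by omega), cf_in (by omega),
      narayana_zero, narayana_zero]
    have h := edge_case d
    push_cast at h ⊢
    linear_combination h
  · -- 2 ≤ j ≤ r
    obtain ⟨v, rfl⟩ : ∃ v, j = v + 2 := ⟨j - 2, by omega⟩
    obtain ⟨d, rfl⟩ : ∃ d, r = v + d + 2 := ⟨r - v - 2, by omega⟩
    rw [if_pos (by omega), if_pos (by omega),
      show v+2-1 = v+1 from rfl, show v+2-2 = v from rfl,
      cf_in (by omega), cf_in (by omega), cf_in (by omega),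
      cf_in (by omega), cf_in (by omega), cf_in (by omega),
      show v+d+2+2 = v+d+4 by omega, show v+d+2+1 = v+d+3 by omega]
    have h := generic_case v d
    push_cast at h ⊢
    linear_combination h

end NarayanaAux

namespace NarayanaAux

open Polynomial

noncomputable def q (m : ℕ) : Polynomial ℚ :=
  if m = 0 then 1 else ∑ i ∈ Finset.range m, Polynomial.C (narayana (m-1) i) * Polynomial.X ^ i

lemma q_zero : q 0 = 1 := by simp [q]

lemma q_succ (m : ℕ) : q (m+1)
    = ∑ i ∈ Finset.range (m+1), Polynomial.C (narayana m i) * Polynomial.X ^ i := by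
  simp [q]

lemma coeff_q (m j : ℕ) : (q (m+1)).coeff j = cf m j := by
  rw [q_succ, Polynomial.finset_sum_coeff]
  simp only [Polynomial.coeff_C_mul, Polynomial.coeff_X_pow, mul_ite, mul_one, mul_zero]
  rw [Finset.sum_ite_eq (Finset.range (m+1)) j (narayana m)]
  simp [cf, Finset.mem_range, Nat.lt_succ_iff]

lemma q_one : q 1 = 1 := by
  rw [q_succ]
  simp [narayana_zero]

lemma q_two : q 2 = Polynomial.X + 1 := by
  rw [q_succ, Finset.sum_range_succ, Finset.sum_range_one]
  rw [narayana_zero, show narayana 1 1 = 1 from narayana_self 1]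
  simp
  ring

lemma C2 : (Polynomial.C (2:ℚ)) = 2 := by
  rw [show ((2:ℚ)) = ((2:ℕ):ℚ) by norm_num, Polynomial.C_eq_natCast]
  norm_num

lemma B1 (k : ℕ) :
    Polynomial.C ((k:ℚ)+3) * q (k+2)
      = Polynomial.C (2*(k:ℚ)+3) * ((Polynomial.X + 1) * q (k+1))
        - Polynomial.C ((k:ℚ)) * ((Polynomial.X - 1)^2 * q k) := by
  rcases k with _ | r
  · rw [show (0:ℕ)+2 = 2 by omega, show (0:ℕ)+1 = 1 by omega, q_one, q_two]
    push_cast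
    simp
  · have hco : (Polynomial.X + 1) * q (r+1+1)
        = q (r+1+1) * Polynomial.X ^ 1 + q (r+1+1) * Polynomial.X ^ 0 := by ring
    have hco2 : (Polynomial.X - 1)^2 * q (r+1)
        = q (r+1) * Polynomial.X ^ 2 - Polynomial.C 2 * (q (r+1) * Polynomial.X ^ 1)
          + q (r+1) * Polynomial.X ^ 0 := by rw [C2]; ring
    rw [hco, hco2]
    apply Polynomial.ext
    intro j
    rw [show r+1+2 = (r+2)+1 by omega]
    simp only [Polynomial.coeff_add, Polynomial.coeff_sub, Polynomial.coeff_C_mul,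
      Polynomial.mul_coeff_zero, Polynomial.coeff_mul_X_pow', coeff_q, pow_zero, mul_one]
    have h := key r j
    push_cast at h ⊢
    linear_combination h

lemma B1c (k : ℕ) :
    ((k : Polynomial ℚ)+3) * q (k+2)
      = (2*(k : Polynomial ℚ)+3) * ((Polynomial.X + 1) * q (k+1))
        - (k : Polynomial ℚ) * ((Polynomial.X - 1)^2 * q k) := by
  have h := B1 k
  simp only [map_add, map_mul, map_ofNat, Polynomial.C_eq_natCast] at h
  convert h using 2

noncomputable def u (m : ℕ) : Polynomial ℚ := ∑ s ∈ Finset.Ico 1 m, q s * q (m - s)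

lemma sum_reflect (m : ℕ) (F : ℕ → Polynomial ℚ) :
    ∑ s ∈ Finset.Ico 1 m, F (m - s) = ∑ s ∈ Finset.Ico 1 m, F s := by
  have h := Finset.sum_Ico_reflect F 1 (show m ≤ m+1 by omega)
  rwa [show m+1-m = 1 by omega, show m+1-1 = m by omega] at h

lemma two_mul_weighted (m : ℕ) (w : ℕ → Polynomial ℚ) (wc : Polynomial ℚ)
    (hw : ∀ s ∈ Finset.Ico 1 m, w s + w (m - s) = wc) :
    (∑ s ∈ Finset.Ico 1 m, w s * (q s * q (m - s))) * 2 = wc * u m := by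
  have hrefl := sum_reflect m (fun s => w s * (q s * q (m - s)))
  have hrefl2 : ∑ s ∈ Finset.Ico 1 m, w (m-s) * (q s * q (m-s))
      = ∑ s ∈ Finset.Ico 1 m, w s * (q s * q (m-s)) := by
    rw [← hrefl]
    refine Finset.sum_congr rfl fun s hs => ?_
    have hs' := Finset.mem_Ico.mp hs
    rw [show m - (m - s) = s by omega]
    ring
  calc (∑ s ∈ Finset.Ico 1 m, w s * (q s * q (m - s))) * 2
      = ∑ s ∈ Finset.Ico 1 m, w s * (q s * q (m-s))
        + ∑ s ∈ Finset.Ico 1 m, w (m-s) * (q s * q (m-s)) := by rw [hrefl2]; ring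
    _ = ∑ s ∈ Finset.Ico 1 m, (w s + w (m-s)) * (q s * q (m-s)) := by
        rw [← Finset.sum_add_distrib]
        exact Finset.sum_congr rfl fun s hs => by ring
    _ = ∑ s ∈ Finset.Ico 1 m, wc * (q s * q (m-s)) :=
        Finset.sum_congr rfl fun s hs => by rw [hw s hs]
    _ = wc * u m := by rw [u, Finset.mul_sum]

lemma L3 (m : ℕ) :
    ((m:Polynomial ℚ)+5) * u (m+3)
      = 4 * q (m+2) + (2*(m:Polynomial ℚ)+6) * ((Polynomial.X+1) * u (m+2))
        - ((m:Polynomial ℚ)+1) * ((Polynomial.X-1)^2 * u (m+1)) := by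
  have hS : (∑ s ∈ Finset.Ico 1 (m+3), ((m:Polynomial ℚ) - (s:Polynomial ℚ) + 4) * (q s * q (m+3-s))) * 2
      = ((m:Polynomial ℚ)+5) * u (m+3) := by
    refine two_mul_weighted (m+3) (fun s => (m:Polynomial ℚ) - (s:Polynomial ℚ) + 4) _ ?_
    intro s hs
    have hs' := Finset.mem_Ico.mp hs
    rw [Nat.cast_sub (show s ≤ m+3 by omega)]
    push_cast
    ring
  have hT1 : (∑ s ∈ Finset.Ico 1 (m+2), (2*((m:Polynomial ℚ) - (s:Polynomial ℚ))+5) * (q s * q (m+2-s))) * 2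
      = (2*(m:Polynomial ℚ)+6) * u (m+2) := by
    refine two_mul_weighted (m+2) (fun s => 2*((m:Polynomial ℚ) - (s:Polynomial ℚ))+5) _ ?_
    intro s hs
    have hs' := Finset.mem_Ico.mp hs
    rw [Nat.cast_sub (show s ≤ m+2 by omega)]
    push_cast
    ring
  have hT2 : (∑ s ∈ Finset.Ico 1 (m+1), ((m:Polynomial ℚ) - (s:Polynomial ℚ) + 1) * (q s * q (m+1-s))) * 2
      = ((m:Polynomial ℚ)+1) * u (m+1) := by
    refine two_mul_weighted (m+1) (fun s => (m:Polynomial ℚ) - (s:Polynomial ℚ) + 1) _ ?_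
    intro s hs
    have hs' := Finset.mem_Ico.mp hs
    rw [Nat.cast_sub (show s ≤ m+1 by omega)]
    push_cast
    ring
  have hmain : ∑ s ∈ Finset.Ico 1 (m+2), ((m:Polynomial ℚ) - (s:Polynomial ℚ) + 4) * (q s * q (m+3-s))
      = (Polynomial.X+1) * (∑ s ∈ Finset.Ico 1 (m+2), (2*((m:Polynomial ℚ) - (s:Polynomial ℚ))+5) * (q s * q (m+2-s)))
        - (Polynomial.X-1)^2 * (∑ s ∈ Finset.Ico 1 (m+2), ((m:Polynomial ℚ) - (s:Polynomial ℚ) + 1) * (q s * q (m+2-s-1))) := by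
    rw [Finset.mul_sum, Finset.mul_sum, ← Finset.sum_sub_distrib]
    refine Finset.sum_congr rfl fun s hs => ?_
    have hs' := Finset.mem_Ico.mp hs
    have h := B1c (m+1-s)
    rw [show m+1-s+2 = m+3-s by omega, show m+1-s+1 = m+2-s by omega,
        Nat.cast_sub (show s ≤ m+1 by omega)] at h
    have hq : q (m+1-s) = q (m+2-s-1) := by rw [show m+2-s-1 = m+1-s by omega]
    rw [hq] at h
    push_cast at h
    linear_combination q s * h
  have hdropS : ∑ s ∈ Finset.Ico 1 (m+3), ((m:Polynomial ℚ) - (s:Polynomial ℚ) + 4) * (q s * q (m+3-s))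
      = ∑ s ∈ Finset.Ico 1 (m+2), ((m:Polynomial ℚ) - (s:Polynomial ℚ) + 4) * (q s * q (m+3-s)) + 2 * q (m+2) := by
    rw [Finset.sum_Ico_succ_top (by omega)]
    congr 1
    rw [show m+3-(m+2) = 1 by omega, q_one]
    push_cast
    ring
  have hdropT2 : ∑ s ∈ Finset.Ico 1 (m+2), ((m:Polynomial ℚ) - (s:Polynomial ℚ) + 1) * (q s * q (m+2-s-1))
      = ∑ s ∈ Finset.Ico 1 (m+1), ((m:Polynomial ℚ) - (s:Polynomial ℚ) + 1) * (q s * q (m+1-s)) := by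
    rw [Finset.sum_Ico_succ_top (by omega)]
    have hz : ((m:Polynomial ℚ) - ((m+1:ℕ):Polynomial ℚ) + 1) * (q (m+1) * q (m+2-(m+1)-1)) = 0 := by
      push_cast
      ring
    rw [hz, add_zero]
    refine Finset.sum_congr rfl fun s hs => ?_
    rw [show m+2-s-1 = m+1-s by omega]
  linear_combination -hS + 2 * hdropS + 2 * hmain + (Polynomial.X+1) * hT1
    - 2 * (Polynomial.X-1)^2 * hdropT2 - (Polynomial.X-1)^2 * hT2

lemma C3 : (Polynomial.C (3:ℚ)) = 3 := by
  rw [show ((3:ℚ)) = ((3:ℕ):ℚ) by norm_num, Polynomial.C_eq_natCast]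
  norm_num

lemma q_three : q 3 = Polynomial.X^2 + 3 * Polynomial.X + 1 := by
  rw [q_succ, Finset.sum_range_succ, Finset.sum_range_succ, Finset.sum_range_one]
  rw [narayana_zero, show narayana 2 2 = 1 from narayana_self 2,
    show narayana 2 1 = 3 by norm_num [narayana, Nat.factorial]]
  simp [C3]
  ring

lemma u_one : u 1 = 0 := by simp [u]

lemma u_two : u 2 = 1 := by
  rw [u, show Finset.Ico 1 2 = {1} from rfl]
  simp [q_one]

lemma Cq (x : ℚ) (hx : x ≠ 0) : (Polynomial.C x) ≠ 0 := by
  simpa using hx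

lemma main_poly (n : ℕ) (hn : 1 ≤ n) :
    q (n+1) = (Polynomial.X+1) * q n + Polynomial.X * u n := by
  induction n using Nat.strong_induction_on with
  | _ n ih =>
    match n, hn with
    | 1, _ => rw [q_two, q_one, u_one]; ring
    | 2, _ => rw [q_three, q_two, u_two]; ring
    | (m+3), _ =>
      have ih1 := ih (m+2) (by omega) (by omega)
      have ih2 := ih (m+1) (by omega) (by omega)
      have hL3 := L3 m
      have hB1a := B1c (m+2)
      have hB1b := B1c (m+1)
      rw [show m+2+2 = m+3+1 by omega, show m+2+1 = m+3 by omega] at hB1a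
      rw [show m+1+2 = m+3 by omega, show m+1+1 = m+2 by omega] at hB1b
      push_cast at hB1a hB1b
      have hc : ((m : Polynomial ℚ)+5) ≠ 0 := by
        have h5 : ((m : Polynomial ℚ)+5) = Polynomial.C ((m:ℚ)+5) := by
          simp [map_add, Polynomial.C_eq_natCast, map_ofNat]
        rw [h5]
        exact Cq _ (by positivity)
      apply mul_left_cancel₀ hc
      linear_combination hB1a - Polynomial.X * hL3 + (2*(m:Polynomial ℚ)+6)*(Polynomial.X+1)*ih1
        - ((m:Polynomial ℚ)+1)*(Polynomial.X-1)^2*ih2 - (Polynomial.X+1)*hB1b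

end NarayanaAux

namespace NarayanaAux

noncomputable def phi : Polynomial ℚ →ₐ[ℚ] LaurentPolynomial ℚ := Polynomial.aeval (T 2)

lemma phi_C (a : ℚ) : phi (Polynomial.C a) = LaurentPolynomial.C a := by
  simp [phi, LaurentPolynomial.algebraMap_apply]

lemma phi_X : phi Polynomial.X = T 2 := by simp [phi]

lemma np_succ (m : ℕ) : narayanaPoly (m+1)
    = ∑ i ∈ Finset.range (m+1), LaurentPolynomial.C (narayana m i) * T ((m:ℤ) - 2*i) := rfl

lemma np_reflect (m : ℕ) :
    ∑ i ∈ Finset.range (m+1), LaurentPolynomial.C (narayana m i) * T ((m:ℤ) - 2*i)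
      = ∑ i ∈ Finset.range (m+1), LaurentPolynomial.C (narayana m i) * T (2*(i:ℤ) - m) := by
  have h := Finset.sum_range_reflect
    (fun i => LaurentPolynomial.C (narayana m i) * T ((m:ℤ) - 2*i)) (m+1)
  rw [← h]
  refine Finset.sum_congr rfl fun i hi => ?_
  have hi' := Finset.mem_range.mp hi
  rw [show m+1-1-i = m - i by omega]
  have harg : ((m:ℤ) - 2*((m-i:ℕ):ℤ)) = 2*(i:ℤ) - m := by
    rw [Nat.cast_sub (by omega : i ≤ m)]; ring
  rw [harg, narayana_symm m i (by omega)]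

lemma link (m : ℕ) : narayanaPoly (m+1) = phi (q (m+1)) * T (-(m:ℤ)) := by
  rw [np_succ, np_reflect, q_succ, map_sum, Finset.sum_mul]
  refine Finset.sum_congr rfl fun i hi => ?_
  rw [map_mul, phi_C, map_pow, phi_X, T_pow, mul_assoc, ← T_add]
  congr 2
  ring

lemma link' (s : ℕ) (hs : 1 ≤ s) : narayanaPoly s = phi (q s) * T (1 - (s:ℤ)) := by
  obtain ⟨t, rfl⟩ : ∃ t, s = t+1 := ⟨s-1, by omega⟩
  rw [link]
  congr 2
  push_cast
  ring

lemma invert_np (s : ℕ) (hs : 1 ≤ s) :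
    LaurentPolynomial.invert (narayanaPoly s) = narayanaPoly s := by
  obtain ⟨t, rfl⟩ : ∃ t, s = t+1 := ⟨s-1, by omega⟩
  have h1 : LaurentPolynomial.invert (narayanaPoly (t+1))
      = ∑ i ∈ Finset.range (t+1), LaurentPolynomial.C (narayana t i) * T (2*(i:ℤ) - t) := by
    rw [np_succ, map_sum]
    refine Finset.sum_congr rfl fun i hi => ?_
    rw [map_mul, LaurentPolynomial.invert_C, LaurentPolynomial.invert_T]
    congr 1
    congr 1
    ring
  rw [h1, ← np_reflect, ← np_succ]

end NarayanaAux


open NarayanaAux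

/-- The Narayana polynomials satisfy the Catalan-type recurrence
`C_{n+1}(z) = ∑_{s=0}^n C_s(z⁻¹) · C_{n-s}(z)`, where `z ↦ z⁻¹` is `invert`. -/
theorem stmt_5 (n : ℕ) :
    narayanaPoly (n + 1) =
      ∑ s ∈ Finset.range (n + 1),
        LaurentPolynomial.invert (narayanaPoly s) * narayanaPoly (n - s) := by
  rcases n with _ | n
  · rw [Finset.sum_range_one, show narayanaPoly 0 = T (-1) from rfl,
      LaurentPolynomial.invert_T, np_succ, Finset.sum_range_one, narayana_zero]
    rw [show (-(-1:ℤ)) = 1 by ring, ← T_add]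
    norm_num
  · have hsplit : ∑ s ∈ Finset.range (n+1+1),
        LaurentPolynomial.invert (narayanaPoly s) * narayanaPoly (n+1-s)
        = LaurentPolynomial.invert (narayanaPoly 0) * narayanaPoly (n+1)
          + ∑ s ∈ Finset.Ico 1 (n+1+1),
              LaurentPolynomial.invert (narayanaPoly s) * narayanaPoly (n+1-s) := by
      rw [Finset.range_eq_Ico, Finset.sum_eq_sum_Ico_succ_bot (by omega)]
      norm_num
    have hshift : ∀ p : Polynomial ℚ,
        phi p * T (1 - (n:ℤ)) = phi (Polynomial.X * p) * T (-(n:ℤ)-1) := by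
      intro p
      rw [map_mul, phi_X, mul_comm (T 2) (phi p), mul_assoc, ← T_add,
        show ((2:ℤ) + (-(n:ℤ)-1)) = 1 - n by ring]
    have hmid : ∀ s ∈ Finset.Ico 1 (n+1),
        LaurentPolynomial.invert (narayanaPoly s) * narayanaPoly (n+1-s)
          = phi (q s * q (n+1-s)) * T (1 - (n:ℤ)) := by
      intro s hs
      have hs' := Finset.mem_Ico.mp hs
      rw [invert_np s (by omega), link' s (by omega), link' (n+1-s) (by omega),
        mul_mul_mul_comm, ← T_add, map_mul]
      congr 2
      rw [Nat.cast_sub (show s ≤ n+1 by omega)]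
      push_cast
      ring
    have hmidsum : ∑ s ∈ Finset.Ico 1 (n+1),
        LaurentPolynomial.invert (narayanaPoly s) * narayanaPoly (n+1-s)
          = phi (u (n+1)) * T (1 - (n:ℤ)) := by
      rw [Finset.sum_congr rfl hmid, ← Finset.sum_mul, ← map_sum, u]
    have h0 : LaurentPolynomial.invert (narayanaPoly 0) * narayanaPoly (n+1)
        = phi (q (n+1)) * T (1 - (n:ℤ)) := by
      rw [show narayanaPoly 0 = T (-1) from rfl, LaurentPolynomial.invert_T,
        show (-(-1:ℤ)) = 1 by ring, link n, ← mul_assoc,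
        mul_comm (T 1) (phi (q (n+1))), mul_assoc, ← T_add,
        show ((1:ℤ) + -(n:ℤ)) = 1 - n by ring]
    have htop : LaurentPolynomial.invert (narayanaPoly (n+1)) * narayanaPoly 0
        = phi (q (n+1)) * T (-(n:ℤ)-1) := by
      rw [invert_np (n+1) (by omega), link n, show narayanaPoly 0 = T (-1) from rfl,
        mul_assoc, ← T_add, show (-(n:ℤ) + -1) = -(n:ℤ)-1 by ring]
    have hLHS : narayanaPoly (n+1+1) = phi (q (n+2)) * T (-(n:ℤ)-1) := by
      rw [link (n+1), show n+1+1 = n+2 by omega]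
      congr 2
      push_cast
      ring
    rw [hsplit, Finset.sum_Ico_succ_top (by omega), hLHS, h0, hmidsum,
      show n+1-(n+1) = 0 by omega, htop, hshift, hshift]
    rw [← add_mul, ← add_mul, ← map_add, ← map_add]
    congr 2
    have hm := main_poly (n+1) (by omega)
    rw [show n+1+1 = n+2 by omega] at hm
    linear_combination hm
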